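/- arXiv:1307.1901 — 4 statements merged into one kernel-verified Lean document; each statement's English description precedes it below -/
import Mathlib

section
/- Let n ≥ 0 and let λ be a partition with i_{2n}(λ) < ∞. Then ℓ(λ) ≤ λ₁ + 2n + 1. -/
/-- A partition: a weakly decreasing sequence of nonnegative integers, indexed starting at 1
(`f 0 = 0` by convention), with finitely many nonzero terms. `f i` is the part `λ_i`. -/
structure NatPartition where
  f : ℕ → ℕ
  f_zero : f 0 = 0
  antitone : ∀ ⦃i j : ℕ⦄, 1 ≤ i → i ≤ j → f j ≤ f i
  ev_zero : ∃ N, ∀ i, N ≤ i → f i = 0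

namespace NatPartition

/-- The number of nonzero parts `ℓ(λ)`. -/
noncomputable def len (p : NatPartition) : ℕ := sSup {i | p.f i ≠ 0}

/-- The size `|λ| = Σ_i λ_i`. -/
noncomputable def size (p : NatPartition) : ℕ := ∑ᶠ i, p.f i

/-- The transpose (conjugate): `g† j = #{i ≥ 1 : g i ≥ j}`. -/
noncomputable def conjFun (g : ℕ → ℕ) (j : ℕ) : ℕ := Set.ncard {i | 1 ≤ i ∧ j ≤ g i}

/-- Containment of partitions: `ν ⊆ μ`. -/
def Sub (ν μ : NatPartition) : Prop := ∀ i, ν.f i ≤ μ.f i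

/-- The cells (boxes) of the skew diagram `μ/ν`: pairs `(i,j)` with `i ≥ 1` and
`ν_i < j ≤ μ_i`. -/
def cells (μ ν : NatPartition) : Set (ℕ × ℕ) :=
  {c | 1 ≤ c.1 ∧ ν.f c.1 < c.2 ∧ c.2 ≤ μ.f c.1}

/-- Two boxes share an edge. -/
def Adj (a b : ℕ × ℕ) : Prop :=
  (a.1 = b.1 ∧ (a.2 + 1 = b.2 ∨ b.2 + 1 = a.2)) ∨
  (a.2 = b.2 ∧ (a.1 + 1 = b.1 ∨ b.1 + 1 = a.1))

/-- A set of boxes is connected if any two of its boxes are joined by a chain of its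
boxes, each sharing an edge with the next. -/
def IsConnected (s : Set (ℕ × ℕ)) : Prop :=
  ∀ a ∈ s, ∀ b ∈ s, Relation.ReflTransGen (fun x y => x ∈ s ∧ y ∈ s ∧ Adj x y) a b

/-- `μ/ν` is a border strip: `ν ⊆ μ`, and the skew diagram is nonempty, connected,
and contains no 2×2 square. -/
def IsBorderStrip (μ ν : NatPartition) : Prop :=
  Sub ν μ ∧ (cells μ ν).Nonempty ∧ IsConnected (cells μ ν) ∧
    ¬ ∃ i j : ℕ, (i, j) ∈ cells μ ν ∧ (i + 1, j) ∈ cells μ ν ∧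
      (i, j + 1) ∈ cells μ ν ∧ (i + 1, j + 1) ∈ cells μ ν

/-- The number of boxes of `μ/ν`. -/
noncomputable def stripSize (μ ν : NatPartition) : ℕ := (cells μ ν).ncard

/-- The number of rows that `μ/ν` occupies. -/
noncomputable def rows (μ ν : NatPartition) : ℕ := (Prod.fst '' cells μ ν).ncard

/-- The number of columns that `μ/ν` occupies. -/
noncomputable def cols (μ ν : NatPartition) : ℕ := (Prod.snd '' cells μ ν).ncard

/-- The graph of the symplectic modification rule: `ModRule n μ i τ` holds iff
`i_{2n}(μ) = i < ∞` and `τ_{2n}(μ) = τ`. -/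
inductive ModRule (n : ℕ) : NatPartition → ℕ → NatPartition → Prop
  | base (μ : NatPartition) (h : μ.len ≤ n) : ModRule n μ 0 μ
  | step (μ ν τ : NatPartition) (i : ℕ)
      (hlen : n < μ.len)
      (hbs : IsBorderStrip μ ν)
      (hsize : stripSize μ ν = 2 * (μ.len - n - 1))
      (hbox : (μ.len, 1) ∈ cells μ ν)
      (hrec : ModRule n ν i τ) :
      ModRule n μ (cols μ ν + i) τ

/-- `i_{2n}(μ) ∈ ℕ∞`; it is `⊤ = ∞` exactly when the modification rule fails. -/
noncomputable def i2 (n : ℕ) (μ : NatPartition) : ℕ∞ :=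
  sInf {c | ∃ i τ, ModRule n μ i τ ∧ c = (i : ℕ∞)}

-- `τ_{2n}(μ)`, defined (arbitrarily, as `μ` itself) when `i_{2n}(μ) = ∞`.
open Classical in
noncomputable def tau (n : ℕ) (μ : NatPartition) : NatPartition :=
  if h : ∃ it : ℕ × NatPartition, ModRule n μ it.1 it.2 then h.choose.2 else μ

end NatPartition

open NatPartition in
/-- If `i_{2n}(λ) < ∞` then `ℓ(λ) ≤ λ₁ + 2n + 1`. -/
theorem statement8 (n : ℕ) (lam : NatPartition) (hfin : i2 n lam < ⊤) :
    lam.len ≤ lam.f 1 + 2 * n + 1 := by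
  -- Auxiliary fact: if `p.f i ≠ 0` then `i ≤ p.len`.
  have le_len : ∀ (p : NatPartition) (i : ℕ), p.f i ≠ 0 → i ≤ p.len := by
    intro p i h
    obtain ⟨N, hN⟩ := p.ev_zero
    refine le_csSup ⟨N, ?_⟩ h
    intro j hj
    by_contra hc
    exact hj (hN j (by omega))
  -- Extract a ModRule derivation from finiteness of i2.
  have hex : ∃ i τ, ModRule n lam i τ := by
    by_contra h
    have hempty : {c : ℕ∞ | ∃ i τ, ModRule n lam i τ ∧ c = (i : ℕ∞)} = ∅ := by
      ext c
      simp only [Set.mem_setOf_eq, Set.mem_empty_iff_false, iff_false]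
      rintro ⟨i, τ, hm, _⟩
      exact h ⟨i, τ, hm⟩
    rw [i2, hempty, sInf_empty] at hfin
    exact lt_irrefl _ hfin
  obtain ⟨i, τ, hm⟩ := hex
  cases hm with
  | base _ h => omega
  | step _ ν τ i hlen hbs hsize hbox hrec =>
    obtain ⟨hsub, hne, hconn, h2x2⟩ := hbs
    have mem_cells : ∀ (μ ν : NatPartition) (a b : ℕ),
        (a, b) ∈ cells μ ν ↔ 1 ≤ a ∧ ν.f a < b ∧ b ≤ μ.f a :=
      fun _ _ _ _ => Iff.rfl
    set L := lam.len with hLdef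
    obtain ⟨hL1, hνL, hμL⟩ := (mem_cells lam ν L 1).mp hbox
    have hνL0 : ν.f L = 0 := by omega
    -- no 2×2 square forces `lam.f (i+1) ≤ ν.f i + 1` for `i ≥ 1`
    have hstep : ∀ i : ℕ, 1 ≤ i → lam.f (i+1) ≤ ν.f i + 1 := by
      intro i hi
      by_contra hc
      push_neg at hc
      have haμ : lam.f (i+1) ≤ lam.f i := lam.antitone hi (Nat.le_succ i)
      have haν : ν.f (i+1) ≤ ν.f i := ν.antitone hi (Nat.le_succ i)
      exact h2x2 ⟨i, ν.f i + 1,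
        (mem_cells lam ν i (ν.f i + 1)).mpr ⟨hi, by omega, by omega⟩,
        (mem_cells lam ν (i+1) (ν.f i + 1)).mpr ⟨by omega, by omega, by omega⟩,
        (mem_cells lam ν i (ν.f i + 2)).mpr ⟨hi, by omega, by omega⟩,
        (mem_cells lam ν (i+1) (ν.f i + 2)).mpr ⟨by omega, by omega, by omega⟩⟩
    -- telescoping bound on the row counts
    have key : ∀ k : ℕ, (∑ j ∈ Finset.Icc 1 k, (lam.f j - ν.f j)) + lam.f (k+1)
        ≤ lam.f 1 + k := by
      intro k
      induction k with
      | zero => simp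
      | succ m ih =>
        rw [Finset.sum_Icc_succ_top (by omega : 1 ≤ m + 1)]
        have h1 := hstep (m+1) (by omega)
        have h2 := hsub (m+1)
        omega
    -- the strip size is at most the sum of the row counts over rows 1..L
    have hsize_le : stripSize lam ν ≤ ∑ j ∈ Finset.Icc 1 L, (lam.f j - ν.f j) := by
      classical
      set F : Finset (ℕ × ℕ) :=
        (Finset.Icc 1 L).biUnion
          (fun j => {j} ×ˢ Finset.Icc (ν.f j + 1) (lam.f j)) with hF
      have hsubF : cells lam ν ⊆ ↑F := by
        intro c hc
        obtain ⟨a, b⟩ := c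
        obtain ⟨ha1, hb1, hb2⟩ := (mem_cells lam ν a b).mp hc
        have haL : a ≤ L := le_len lam a (by omega)
        simp only [hF, Finset.coe_biUnion, Finset.mem_coe, Finset.mem_Icc,
          Set.mem_iUnion, Finset.mem_product, Finset.mem_singleton]
        exact ⟨a, ⟨ha1, haL⟩, rfl, by omega, by omega⟩
      calc stripSize lam ν = (cells lam ν).ncard := rfl
        _ ≤ (↑F : Set (ℕ × ℕ)).ncard := Set.ncard_le_ncard hsubF F.finite_toSet
        _ = F.card := Set.ncard_coe_finset F
        _ ≤ ∑ j ∈ Finset.Icc 1 L,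
              ({j} ×ˢ Finset.Icc (ν.f j + 1) (lam.f j)).card :=
            Finset.card_biUnion_le
        _ = ∑ j ∈ Finset.Icc 1 L, (lam.f j - ν.f j) := by
            refine Finset.sum_congr rfl fun j _ => ?_
            rw [Finset.card_product, Finset.card_singleton, Nat.card_Icc]
            omega
    -- put everything together
    obtain ⟨m, hmL⟩ : ∃ m, L = m + 1 := ⟨L - 1, by omega⟩
    have hkey := key m
    have hsum : (∑ j ∈ Finset.Icc 1 L, (lam.f j - ν.f j))
        = (∑ j ∈ Finset.Icc 1 m, (lam.f j - ν.f j)) + lam.f (m+1) := by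
      rw [hmL, Finset.sum_Icc_succ_top (by omega : 1 ≤ m + 1)]
      rw [← hmL, hνL0]
      omega
    rw [hsum] at hsize_le
    have hfinal : 2 * (L - n - 1) ≤ lam.f 1 + m := by
      rw [← hsize]
      omega
    omega
end

section
/- Let n ≥ 0 and i ≥ 0, and consider the single-column partition (1^i). If 0 ≤ i ≤ n, then i_{2n}((1^i)) = 0 and τ_{2n}((1^i)) = (1^i). If n+2 ≤ i ≤ 2n+2, then i_{2n}((1^i)) = 1 and τ_{2n}((1^i)) = (1^{2n+2−i}). If i = n+1 or i > 2n+2, then i_{2n}((1^i)) = ∞. -/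
/-- A partition: a weakly decreasing sequence of nonnegative integers, indexed starting at 1
(`f 0 = 0` by convention), with finitely many nonzero terms. `f i` is the part `λ_i`. -/
structure PartitionSeq where
  f : ℕ → ℕ
  f_zero : f 0 = 0
  antitone : ∀ ⦃i j : ℕ⦄, 1 ≤ i → i ≤ j → f j ≤ f i
  ev_zero : ∃ N, ∀ i, N ≤ i → f i = 0

namespace PartitionSeq

/-- The number of nonzero parts `ℓ(λ)`. -/
noncomputable def len (p : PartitionSeq) : ℕ := sSup {i | p.f i ≠ 0}

/-- The size `|λ| = Σ_i λ_i`. -/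
noncomputable def size (p : PartitionSeq) : ℕ := ∑ᶠ i, p.f i

/-- The transpose (conjugate): `g† j = #{i ≥ 1 : g i ≥ j}`. -/
noncomputable def conjFun (g : ℕ → ℕ) (j : ℕ) : ℕ := Set.ncard {i | 1 ≤ i ∧ j ≤ g i}

/-- Containment of partitions: `ν ⊆ μ`. -/
def Sub (ν μ : PartitionSeq) : Prop := ∀ i, ν.f i ≤ μ.f i

/-- The cells (boxes) of the skew diagram `μ/ν`: pairs `(i,j)` with `i ≥ 1` and
`ν_i < j ≤ μ_i`. -/
def cells (μ ν : PartitionSeq) : Set (ℕ × ℕ) :=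
  {c | 1 ≤ c.1 ∧ ν.f c.1 < c.2 ∧ c.2 ≤ μ.f c.1}

/-- Two boxes share an edge. -/
def Adj (a b : ℕ × ℕ) : Prop :=
  (a.1 = b.1 ∧ (a.2 + 1 = b.2 ∨ b.2 + 1 = a.2)) ∨
  (a.2 = b.2 ∧ (a.1 + 1 = b.1 ∨ b.1 + 1 = a.1))

/-- A set of boxes is connected if any two of its boxes are joined by a chain of its
boxes, each sharing an edge with the next. -/
def IsConnected (s : Set (ℕ × ℕ)) : Prop :=
  ∀ a ∈ s, ∀ b ∈ s, Relation.ReflTransGen (fun x y => x ∈ s ∧ y ∈ s ∧ Adj x y) a b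

/-- `μ/ν` is a border strip: `ν ⊆ μ`, and the skew diagram is nonempty, connected,
and contains no 2×2 square. -/
def IsBorderStrip (μ ν : PartitionSeq) : Prop :=
  Sub ν μ ∧ (cells μ ν).Nonempty ∧ IsConnected (cells μ ν) ∧
    ¬ ∃ i j : ℕ, (i, j) ∈ cells μ ν ∧ (i + 1, j) ∈ cells μ ν ∧
      (i, j + 1) ∈ cells μ ν ∧ (i + 1, j + 1) ∈ cells μ ν

/-- The number of boxes of `μ/ν`. -/
noncomputable def stripSize (μ ν : PartitionSeq) : ℕ := (cells μ ν).ncard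

/-- The number of rows that `μ/ν` occupies. -/
noncomputable def rows (μ ν : PartitionSeq) : ℕ := (Prod.fst '' cells μ ν).ncard

/-- The number of columns that `μ/ν` occupies. -/
noncomputable def cols (μ ν : PartitionSeq) : ℕ := (Prod.snd '' cells μ ν).ncard

/-- The graph of the symplectic modification rule: `ModRule n μ i τ` holds iff
`i_{2n}(μ) = i < ∞` and `τ_{2n}(μ) = τ`. -/
inductive ModRule (n : ℕ) : PartitionSeq → ℕ → PartitionSeq → Prop
  | base (μ : PartitionSeq) (h : μ.len ≤ n) : ModRule n μ 0 μ
  | step (μ ν τ : PartitionSeq) (i : ℕ)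
      (hlen : n < μ.len)
      (hbs : IsBorderStrip μ ν)
      (hsize : stripSize μ ν = 2 * (μ.len - n - 1))
      (hbox : (μ.len, 1) ∈ cells μ ν)
      (hrec : ModRule n ν i τ) :
      ModRule n μ (cols μ ν + i) τ

/-- `i_{2n}(μ) ∈ ℕ∞`; it is `⊤ = ∞` exactly when the modification rule fails. -/
noncomputable def i2 (n : ℕ) (μ : PartitionSeq) : ℕ∞ :=
  sInf {c | ∃ i τ, ModRule n μ i τ ∧ c = (i : ℕ∞)}

-- `τ_{2n}(μ)`, defined (arbitrarily, as `μ` itself) when `i_{2n}(μ) = ∞`.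
open Classical in
noncomputable def tau (n : ℕ) (μ : PartitionSeq) : PartitionSeq :=
  if h : ∃ it : ℕ × PartitionSeq, ModRule n μ it.1 it.2 then h.choose.2 else μ

end PartitionSeq

namespace PartitionSeq

/-- The single-column partition `(1^m)`. -/
def col (m : ℕ) : PartitionSeq where
  f := fun j => if 1 ≤ j ∧ j ≤ m then 1 else 0
  f_zero := by simp
  antitone := by
    intro i j hi hij
    try dsimp only
    split_ifs <;> omega
  ev_zero := ⟨m + 1, fun i hi => by simp only [ite_eq_right_iff]; omega⟩

end PartitionSeq

namespace PartitionSeq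

lemma ext' {p q : PartitionSeq} (h : p.f = q.f) : p = q := by
  cases p; cases q; cases h; rfl

lemma col_f (m j : ℕ) : (col m).f j = if 1 ≤ j ∧ j ≤ m then 1 else 0 := rfl

lemma col_len (m : ℕ) : (col m).len = m := by
  unfold len
  have hset : {i | (col m).f i ≠ 0} = Set.Icc 1 m := by
    ext j; simp [col_f]
  rw [hset]
  rcases Nat.eq_zero_or_pos m with rfl | hm
  · simp
  · exact csSup_Icc hm

lemma sub_col {ν : PartitionSeq} {i : ℕ} (h : Sub ν (col i)) :
    ∃ m, m ≤ i ∧ ν = col m := by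
  have hle : ∀ j, ν.f j ≤ (col i).f j := h
  have hbd : ∀ j, ν.f j ≠ 0 → 1 ≤ j ∧ j ≤ i := by
    intro j hj
    have := hle j
    rw [col_f] at this
    constructor
    · by_contra hc
      have : j = 0 := by omega
      exact hj (this ▸ ν.f_zero)
    · by_contra hc; simp only [not_le] at hc
      have : (if 1 ≤ j ∧ j ≤ i then 1 else 0) = 0 := by simp; omega
      omega
  rcases Set.eq_empty_or_nonempty {j | ν.f j ≠ 0} with he | hne
  · refine ⟨0, Nat.zero_le _, ext' ?_⟩
    funext j
    have : ν.f j = 0 := by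
      by_contra hc; exact (Set.eq_empty_iff_forall_notMem.mp he j hc).elim
    rw [this, col_f]; split_ifs <;> omega
  · have hbdd : BddAbove {j | ν.f j ≠ 0} := ⟨i, fun j hj => (hbd j hj).2⟩
    set m := sSup {j | ν.f j ≠ 0} with hm
    have hmem : m ∈ {j | ν.f j ≠ 0} := Nat.sSup_mem hne hbdd
    have hmi : m ≤ i := (hbd m hmem).2
    refine ⟨m, hmi, ext' ?_⟩
    funext j
    rw [col_f]
    split_ifs with hc
    · -- 1 ≤ j ≤ m : ν.f j ≥ ν.f m ≥ 1, and ≤ 1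
      have h1 : ν.f m ≤ ν.f j := ν.antitone hc.1 hc.2
      have h2 : 1 ≤ ν.f m := Nat.one_le_iff_ne_zero.mpr hmem
      have h3 : ν.f j ≤ (col i).f j := hle j
      rw [col_f] at h3
      split_ifs at h3 <;> omega
    · rcases Nat.lt_or_ge j 1 with hj | hj
      · have : j = 0 := by omega
        rw [this, ν.f_zero]
      · have hjm : m < j := by omega
        by_contra hcne
        have : j ≤ m := le_csSup hbdd hcne
        omega

lemma cells_col {m i : ℕ} (hm : m ≤ i) :
    cells (col i) (col m) = Set.Ioc m i ×ˢ ({1} : Set ℕ) := by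
  ext ⟨a, b⟩
  simp only [cells, Set.mem_setOf_eq, Set.mem_prod, Set.mem_Ioc, Set.mem_singleton_iff,
    col_f]
  constructor
  · rintro ⟨h1, h2, h3⟩
    split_ifs at h2 h3 <;> omega
  · rintro ⟨⟨hma, hai⟩, rfl⟩
    refine ⟨by omega, ?_, ?_⟩ <;> split_ifs <;> omega

lemma cells_col_image {m i : ℕ} :
    (Set.Ioc m i ×ˢ ({1} : Set ℕ)) = (fun j => (j, 1)) '' Set.Ioc m i := by
  ext ⟨a, b⟩
  simp only [Set.mem_prod, Set.mem_singleton_iff, Set.mem_image]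
  constructor
  · rintro ⟨h, rfl⟩; exact ⟨a, h, rfl⟩
  · rintro ⟨j, hj, h⟩; cases h; exact ⟨hj, rfl⟩

lemma stripSize_col {m i : ℕ} (hm : m ≤ i) :
    stripSize (col i) (col m) = i - m := by
  rw [stripSize, cells_col hm, cells_col_image,
    Set.ncard_image_of_injective _ (fun a b h => by simpa using h),
    ← Nat.card_coe_set_eq, Nat.card_eq_card_toFinset]
  simp

lemma cols_col {m i : ℕ} (hm : m < i) : cols (col i) (col m) = 1 := by
  rw [cols, cells_col hm.le, Set.snd_image_prod ⟨i, by simp [hm]⟩, Set.ncard_singleton]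

lemma adj_symm {a b : ℕ × ℕ} (h : Adj a b) : Adj b a := by
  unfold Adj at *; tauto

lemma isConnected_col_prod {m i : ℕ} :
    IsConnected (Set.Ioc m i ×ˢ ({1} : Set ℕ)) := by
  set s := Set.Ioc m i ×ˢ ({1} : Set ℕ) with hs
  have hmem : ∀ a : ℕ, m < a → a ≤ i → (a, 1) ∈ s := by
    intro a h1 h2; exact ⟨⟨h1, h2⟩, rfl⟩
  have key : ∀ d a, m < a → a + d ≤ i →
      Relation.ReflTransGen (fun x y => x ∈ s ∧ y ∈ s ∧ Adj x y) (a, 1) (a + d, 1) := by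
    intro d
    induction d with
    | zero => intro a _ _; exact Relation.ReflTransGen.refl
    | succ d ih =>
      intro a ha hai
      refine (ih a ha (by omega)).tail ?_
      refine ⟨hmem _ (by omega) (by omega), ?_, ?_⟩
      · have : a + (d + 1) = a + d + 1 := by omega
        rw [this]; exact hmem _ (by omega) (by omega)
      · right
        refine ⟨rfl, Or.inl (by omega)⟩
  intro a ha b hb
  obtain ⟨⟨ha1, ha2⟩, ha3⟩ := ha
  obtain ⟨⟨hb1, hb2⟩, hb3⟩ := hb
  simp only [Set.mem_singleton_iff] at ha3 hb3
  have hsym : Symmetric (fun x y => x ∈ s ∧ y ∈ s ∧ Adj x y) := by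
    intro x y ⟨h1, h2, h3⟩; exact ⟨h2, h1, adj_symm h3⟩
  rcases Nat.le_total a.1 b.1 with hle | hle
  · have := key (b.1 - a.1) a.1 ha1 (by omega)
    have heq : a.1 + (b.1 - a.1) = b.1 := by omega
    rw [heq] at this
    have hae : a = (a.1, 1) := by rw [← ha3]
    have hbe : b = (b.1, 1) := by rw [← hb3]
    rw [hae, hbe]; exact this
  · have := key (a.1 - b.1) b.1 hb1 (by omega)
    have heq : b.1 + (a.1 - b.1) = a.1 := by omega
    rw [heq] at this
    have hae : a = (a.1, 1) := by rw [← ha3]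
    have hbe : b = (b.1, 1) := by rw [← hb3]
    rw [hae, hbe]
    exact (@Relation.ReflTransGen.stdSymm _ _ ⟨fun a b h => hsym h⟩).symm _ _ this

lemma isBorderStrip_col {m i : ℕ} (hm : m < i) :
    IsBorderStrip (col i) (col m) := by
  refine ⟨?_, ?_, ?_, ?_⟩
  · intro j; rw [col_f, col_f]; split_ifs <;> omega
  · exact ⟨(i, 1), by rw [cells_col hm.le]; exact ⟨⟨hm, le_refl i⟩, rfl⟩⟩
  · rw [cells_col hm.le]; exact isConnected_col_prod
  · rintro ⟨a, b, h1, h2, h3, h4⟩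
    rw [cells_col hm.le] at h1 h3
    have : b = 1 := h1.2
    have : b + 1 = 1 := h3.2
    omega

lemma modrule_col_unique {n i k : ℕ} {τ : PartitionSeq} (h : ModRule n (col i) k τ) :
    (i ≤ n ∧ k = 0 ∧ τ = col i) ∨
      (n + 2 ≤ i ∧ i ≤ 2 * n + 2 ∧ k = 1 ∧ τ = col (2 * n + 2 - i)) := by
  cases h with
  | base _ hl => exact Or.inl ⟨by rwa [col_len] at hl, rfl, rfl⟩
  | step _ ν τ k' hlen hbs hsize hbox hrec =>
    obtain ⟨m, hmi, rfl⟩ := sub_col hbs.1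
    rw [col_len] at hlen
    have hmlt : m < i := by
      obtain ⟨c, hc⟩ := hbs.2.1
      rw [cells_col hmi] at hc
      exact lt_of_lt_of_le hc.1.1 hc.1.2
    rw [stripSize_col hmi, col_len] at hsize
    have hfacts : m = 2 * n + 2 - i ∧ n + 2 ≤ i ∧ i ≤ 2 * n + 2 ∧ m ≤ n := by omega
    obtain ⟨hmeq, h1, h2, h3⟩ := hfacts
    cases hrec with
    | base _ hl =>
      refine Or.inr ⟨h1, h2, ?_, by rw [hmeq]⟩
      rw [cols_col hmlt]
    | step _ ν' τ' k'' hlen' _ _ _ _ =>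
      rw [col_len] at hlen'; omega

lemma modrule_col_base {n i : ℕ} (h : i ≤ n) : ModRule n (col i) 0 (col i) :=
  ModRule.base (n := n) _ (by rwa [col_len])

lemma modrule_col_step {n i : ℕ} (h1 : n + 2 ≤ i) (h2 : i ≤ 2 * n + 2) :
    ModRule n (col i) 1 (col (2 * n + 2 - i)) := by
  set m := 2 * n + 2 - i with hm
  have hmlt : m < i := by omega
  have := ModRule.step (n := n) (col i) (col m) (col m) 0
    (by rw [col_len]; omega)
    (isBorderStrip_col hmlt)
    (by rw [stripSize_col hmlt.le, col_len]; omega)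
    (by rw [cells_col hmlt.le, col_len]; exact ⟨⟨hmlt, le_refl i⟩, rfl⟩)
    (modrule_col_base (by omega))
  rwa [cols_col hmlt] at this

end PartitionSeq

open PartitionSeq in
/-- The symplectic modification rule on single columns `(1^i)`. -/
theorem statement9 (n i : ℕ) :
    (i ≤ n → i2 n (col i) = 0 ∧ tau n (col i) = col i) ∧
    (n + 2 ≤ i → i ≤ 2 * n + 2 → i2 n (col i) = 1 ∧ tau n (col i) = col (2 * n + 2 - i)) ∧
    (i = n + 1 ∨ 2 * n + 2 < i → i2 n (col i) = ⊤) := by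
  refine ⟨?_, ?_, ?_⟩
  · intro h
    have hset : {c | ∃ k τ, ModRule n (col i) k τ ∧ c = (k : ℕ∞)} = {(0 : ℕ∞)} := by
      ext c
      simp only [Set.mem_setOf_eq, Set.mem_singleton_iff]
      constructor
      · rintro ⟨k, τ, hm, rfl⟩
        rcases modrule_col_unique hm with ⟨_, rfl, _⟩ | ⟨h1, _, _, _⟩
        · rfl
        · omega
      · rintro rfl
        exact ⟨0, col i, modrule_col_base h, rfl⟩
    refine ⟨by rw [i2, hset, sInf_singleton], ?_⟩
    have hex : ∃ it : ℕ × PartitionSeq, ModRule n (col i) it.1 it.2 :=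
      ⟨(0, col i), modrule_col_base h⟩
    rw [tau, dif_pos hex]
    rcases modrule_col_unique hex.choose_spec with ⟨_, _, ht⟩ | ⟨h1, _, _, _⟩
    · exact ht
    · omega
  · intro h1 h2
    have hset : {c | ∃ k τ, ModRule n (col i) k τ ∧ c = (k : ℕ∞)} = {(1 : ℕ∞)} := by
      ext c
      simp only [Set.mem_setOf_eq, Set.mem_singleton_iff]
      constructor
      · rintro ⟨k, τ, hm, rfl⟩
        rcases modrule_col_unique hm with ⟨hle, _, _⟩ | ⟨_, _, rfl, _⟩
        · omega
        · rfl
      · rintro rfl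
        exact ⟨1, col (2 * n + 2 - i), modrule_col_step h1 h2, rfl⟩
    refine ⟨by rw [i2, hset, sInf_singleton], ?_⟩
    have hex : ∃ it : ℕ × PartitionSeq, ModRule n (col i) it.1 it.2 :=
      ⟨(1, col (2 * n + 2 - i)), modrule_col_step h1 h2⟩
    rw [tau, dif_pos hex]
    rcases modrule_col_unique hex.choose_spec with ⟨hle, _, _⟩ | ⟨_, _, _, ht⟩
    · omega
    · exact ht
  · intro h
    have hset : {c | ∃ k τ, ModRule n (col i) k τ ∧ c = (k : ℕ∞)} = ∅ := by
      ext c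
      simp only [Set.mem_setOf_eq, Set.mem_empty_iff_false, iff_false]
      rintro ⟨k, τ, hm, rfl⟩
      rcases modrule_col_unique hm with ⟨hle, _, _⟩ | ⟨ha, hb, _, _⟩ <;> omega
    rw [i2, hset, sInf_empty]
end

section
/- For every partition λ, one has i₁(λ) < ∞ if and only if λ is self-conjugate, i.e., λ = λ†. -/
/-- A partition: a weakly decreasing sequence of nonnegative integers, indexed starting at 1
(`f 0 = 0` by convention), with finitely many nonzero terms. `f i` is the part `λ_i`. -/
structure SeqPartition where
  f : ℕ → ℕ
  f_zero : f 0 = 0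
  antitone : ∀ ⦃i j : ℕ⦄, 1 ≤ i → i ≤ j → f j ≤ f i
  ev_zero : ∃ N, ∀ i, N ≤ i → f i = 0

namespace SeqPartition

/-- The number of nonzero parts `ℓ(λ)`. -/
noncomputable def len (p : SeqPartition) : ℕ := sSup {i | p.f i ≠ 0}

/-- The size `|λ| = Σ_i λ_i`. -/
noncomputable def size (p : SeqPartition) : ℕ := ∑ᶠ i, p.f i

/-- The transpose (conjugate): `g† j = #{i ≥ 1 : g i ≥ j}`. -/
noncomputable def conjFun (g : ℕ → ℕ) (j : ℕ) : ℕ := Set.ncard {i | 1 ≤ i ∧ j ≤ g i}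

/-- Containment of partitions: `ν ⊆ μ`. -/
def Sub (ν μ : SeqPartition) : Prop := ∀ i, ν.f i ≤ μ.f i

/-- The cells (boxes) of the skew diagram `μ/ν`: pairs `(i,j)` with `i ≥ 1` and
`ν_i < j ≤ μ_i`. -/
def cells (μ ν : SeqPartition) : Set (ℕ × ℕ) :=
  {c | 1 ≤ c.1 ∧ ν.f c.1 < c.2 ∧ c.2 ≤ μ.f c.1}

/-- Two boxes share an edge. -/
def Adj (a b : ℕ × ℕ) : Prop :=
  (a.1 = b.1 ∧ (a.2 + 1 = b.2 ∨ b.2 + 1 = a.2)) ∨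
  (a.2 = b.2 ∧ (a.1 + 1 = b.1 ∨ b.1 + 1 = a.1))

/-- A set of boxes is connected if any two of its boxes are joined by a chain of its
boxes, each sharing an edge with the next. -/
def IsConnected (s : Set (ℕ × ℕ)) : Prop :=
  ∀ a ∈ s, ∀ b ∈ s, Relation.ReflTransGen (fun x y => x ∈ s ∧ y ∈ s ∧ Adj x y) a b

/-- `μ/ν` is a border strip: `ν ⊆ μ`, and the skew diagram is nonempty, connected,
and contains no 2×2 square. -/
def IsBorderStrip (μ ν : SeqPartition) : Prop :=
  Sub ν μ ∧ (cells μ ν).Nonempty ∧ IsConnected (cells μ ν) ∧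
    ¬ ∃ i j : ℕ, (i, j) ∈ cells μ ν ∧ (i + 1, j) ∈ cells μ ν ∧
      (i, j + 1) ∈ cells μ ν ∧ (i + 1, j + 1) ∈ cells μ ν

/-- The number of boxes of `μ/ν`. -/
noncomputable def stripSize (μ ν : SeqPartition) : ℕ := (cells μ ν).ncard

/-- The number of rows that `μ/ν` occupies. -/
noncomputable def rows (μ ν : SeqPartition) : ℕ := (Prod.fst '' cells μ ν).ncard

/-- The number of columns that `μ/ν` occupies. -/
noncomputable def cols (μ ν : SeqPartition) : ℕ := (Prod.snd '' cells μ ν).ncard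

/-- The graph of the symplectic modification rule: `ModRule n μ i τ` holds iff
`i_{2n}(μ) = i < ∞` and `τ_{2n}(μ) = τ`. -/
inductive ModRule (n : ℕ) : SeqPartition → ℕ → SeqPartition → Prop
  | base (μ : SeqPartition) (h : μ.len ≤ n) : ModRule n μ 0 μ
  | step (μ ν τ : SeqPartition) (i : ℕ)
      (hlen : n < μ.len)
      (hbs : IsBorderStrip μ ν)
      (hsize : stripSize μ ν = 2 * (μ.len - n - 1))
      (hbox : (μ.len, 1) ∈ cells μ ν)
      (hrec : ModRule n ν i τ) :
      ModRule n μ (cols μ ν + i) τ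

/-- `i_{2n}(μ) ∈ ℕ∞`; it is `⊤ = ∞` exactly when the modification rule fails. -/
noncomputable def i2 (n : ℕ) (μ : SeqPartition) : ℕ∞ :=
  sInf {c | ∃ i τ, ModRule n μ i τ ∧ c = (i : ℕ∞)}

-- `τ_{2n}(μ)`, defined (arbitrarily, as `μ` itself) when `i_{2n}(μ) = ∞`.
open Classical in
noncomputable def tau (n : ℕ) (μ : SeqPartition) : SeqPartition :=
  if h : ∃ it : ℕ × SeqPartition, ModRule n μ it.1 it.2 then h.choose.2 else μ

end SeqPartition

namespace SeqPartition

/-- The graph of the odd orthogonal (`O(1)`) modification rule: `ModRuleO μ i` holds iff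
`i₁(μ) = i < ∞`.  Here one removes border strips of size `2ℓ(μ) - 1` containing the box
`(ℓ(μ), 1)`, and each removed strip with `c` columns contributes `c - 1`. -/
inductive ModRuleO : SeqPartition → ℕ → Prop
  | base (μ : SeqPartition) (h : μ.len = 0) : ModRuleO μ 0
  | step (μ ν : SeqPartition) (i : ℕ)
      (hlen : 0 < μ.len)
      (hbs : IsBorderStrip μ ν)
      (hsize : stripSize μ ν = 2 * μ.len - 1)
      (hbox : (μ.len, 1) ∈ cells μ ν)
      (hrec : ModRuleO ν i) :
      ModRuleO μ (cols μ ν - 1 + i)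

/-- `i₁(μ) ∈ ℕ∞`; it is `⊤ = ∞` exactly when the `O(1)` modification rule fails. -/
noncomputable def i1 (μ : SeqPartition) : ℕ∞ :=
  sInf {c | ∃ i, ModRuleO μ i ∧ c = (i : ℕ∞)}

end SeqPartition

namespace SeqPartition

lemma bdd (p : SeqPartition) : BddAbove {i | p.f i ≠ 0} := by
  obtain ⟨N, hN⟩ := p.ev_zero
  exact ⟨N, fun i hi => by by_contra h; exact hi (hN i (by omega))⟩

lemma le_len (p : SeqPartition) {i : ℕ} (h : p.f i ≠ 0) : i ≤ p.len := le_csSup p.bdd h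

lemma len_le_of (p : SeqPartition) (m : ℕ) (h : ∀ i, m < i → p.f i = 0) : p.len ≤ m := by
  rcases Set.eq_empty_or_nonempty {i | p.f i ≠ 0} with he | hne
  · rw [len, he, csSup_empty]; exact Nat.zero_le m
  · exact csSup_le hne fun i hi => by by_contra hc; exact hi (h i (by omega))

lemma f_eq_zero_of_len_lt (p : SeqPartition) {i : ℕ} (h : p.len < i) : p.f i = 0 := by
  by_contra hc; exact absurd (p.le_len hc) (by omega)

lemma f_len_ne_zero (p : SeqPartition) (h : 0 < p.len) : p.f p.len ≠ 0 := by
  have hne : {i | p.f i ≠ 0}.Nonempty := by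
    by_contra hc
    rw [Set.not_nonempty_iff_eq_empty] at hc
    have : p.len = 0 := by rw [len, hc, csSup_empty]; rfl
    omega
  exact Nat.sSup_mem hne p.bdd

lemma f_pos (p : SeqPartition) {i : ℕ} (h1 : 1 ≤ i) (h2 : i ≤ p.len) : 1 ≤ p.f i := by
  have := p.f_len_ne_zero (by omega)
  have := p.antitone (i := i) (j := p.len) h1 h2
  omega

lemma seg_eq (p : SeqPartition) {j m : ℕ} (hj : 1 ≤ j) (hm : m = 0 ∨ j ≤ p.f m)
    (hm' : p.f (m + 1) < j) : {i | 1 ≤ i ∧ j ≤ p.f i} = Set.Icc 1 m := by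
  ext i
  simp only [Set.mem_setOf_eq, Set.mem_Icc]
  constructor
  · rintro ⟨h1, h2⟩
    refine ⟨h1, ?_⟩
    by_contra hc
    have := p.antitone (i := m + 1) (j := i) (by omega) (by omega)
    omega
  · rintro ⟨h1, h2⟩
    rcases hm with hm | hm
    · omega
    · exact ⟨h1, le_trans hm (p.antitone h1 h2)⟩

lemma conj_val (p : SeqPartition) {j m : ℕ} (hj : 1 ≤ j) (hm : m = 0 ∨ j ≤ p.f m)
    (hm' : p.f (m + 1) < j) : conjFun p.f j = m := by
  show Set.ncard {i | 1 ≤ i ∧ j ≤ p.f i} = m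
  rw [seg_eq p hj hm hm', ← Finset.coe_Icc, Set.ncard_coe_finset, Nat.card_Icc]
  omega

lemma conj_extract (p : SeqPartition) {j : ℕ} (hj : 1 ≤ j) :
    (conjFun p.f j ≠ 0 → j ≤ p.f (conjFun p.f j)) ∧ p.f (conjFun p.f j + 1) < j := by
  set S := {i | 1 ≤ i ∧ j ≤ p.f i} with hS
  have hbdd : BddAbove S := by
    obtain ⟨N, hN⟩ := p.ev_zero
    exact ⟨N, fun i hi => by by_contra h; have := hN i (by omega); rw [hS] at hi; simp at hi; omega⟩
  rcases Set.eq_empty_or_nonempty S with he | hne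
  · have h0 : conjFun p.f j = 0 := by
      show S.ncard = 0; rw [he]; simp
    rw [h0]
    refine ⟨fun h => absurd rfl h, ?_⟩
    by_contra hc
    have : (1 : ℕ) ∈ S := ⟨le_refl 1, by simpa using hc⟩
    rw [he] at this; exact this
  · set M := sSup S with hM
    have hMS : M ∈ S := Nat.sSup_mem hne hbdd
    have hseg : S = Set.Icc 1 M := by
      ext i
      simp only [hS, Set.mem_setOf_eq, Set.mem_Icc]
      constructor
      · rintro ⟨h1, h2⟩; exact ⟨h1, le_csSup hbdd ⟨h1, h2⟩⟩
      · rintro ⟨h1, h2⟩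
        exact ⟨h1, le_trans hMS.2 (p.antitone h1 h2)⟩
    have hval : conjFun p.f j = M := by
      show S.ncard = M
      rw [hseg, ← Finset.coe_Icc, Set.ncard_coe_finset, Nat.card_Icc]; omega
    rw [hval]
    refine ⟨fun _ => hMS.2, ?_⟩
    by_contra hc
    have : M + 1 ∈ S := ⟨by omega, by omega⟩
    have := le_csSup hbdd this
    omega

lemma conj_zero (p : SeqPartition) : conjFun p.f 0 = 0 := by
  have : {i | 1 ≤ i ∧ 0 ≤ p.f i} = Set.Ici 1 := by ext i; simp
  show Set.ncard _ = 0
  rw [this]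
  exact (Set.Ici_infinite 1).ncard

lemma len_eq_conj_one (p : SeqPartition) : p.len = conjFun p.f 1 := by
  obtain ⟨h1, h2⟩ := p.conj_extract (j := 1) (le_refl 1)
  set m := conjFun p.f 1 with hm
  refine le_antisymm ?_ ?_
  · refine p.len_le_of m fun i hi => ?_
    have := p.antitone (i := m + 1) (j := i) (by omega) (by omega)
    omega
  · rcases Nat.eq_zero_or_pos m with h | h
    · omega
    · exact p.le_len (by have := h1 (by omega); omega)

lemma sum_tele (f g : ℕ → ℕ) (L : ℕ) :
    ∀ k r, r + k = L → (∀ i, r ≤ i → i < L → g i + 1 = f (i + 1) ∧ f (i + 1) ≤ f i) →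
    g L = 0 → ∑ i ∈ Finset.Icc r L, (f i - g i) = f r + (L - r) := by
  intro k
  induction k with
  | zero =>
    intro r hr _ hgL
    subst hr
    simp only [Nat.add_zero] at hgL ⊢
    simp [hgL]
  | succ k ih =>
    intro r hr h hgL
    have hrL : r < L := by omega
    rw [← Finset.Ioc_insert_left (le_of_lt hrL), Finset.sum_insert (by simp),
      ← Finset.Icc_add_one_left_eq_Ioc, ih (r + 1) (by omega) (fun i h1 h2 => h i (by omega) h2) hgL]
    obtain ⟨e1, e2⟩ := h r (le_refl r) hrL
    omega

lemma cells_eq (μ ν : SeqPartition) :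
    cells μ ν = ↑((Finset.Icc 1 μ.len).biUnion fun i => ({i} : Finset ℕ) ×ˢ Finset.Ioc (ν.f i) (μ.f i)) := by
  ext ⟨i, j⟩
  simp only [cells, Set.mem_setOf_eq, Finset.coe_biUnion, Finset.mem_coe, Finset.mem_Icc,
    Set.mem_iUnion, Finset.mem_product, Finset.mem_singleton, Finset.mem_Ioc]
  constructor
  · rintro ⟨h1, h2, h3⟩
    exact ⟨i, ⟨h1, μ.le_len (by omega)⟩, rfl, h2, h3⟩
  · rintro ⟨k, ⟨hk1, _⟩, rfl, h2, h3⟩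
    exact ⟨hk1, h2, h3⟩

lemma stripSize_eq (μ ν : SeqPartition) :
    stripSize μ ν = ∑ i ∈ Finset.Icc 1 μ.len, (μ.f i - ν.f i) := by
  rw [stripSize, cells_eq, Set.ncard_coe_finset, Finset.card_biUnion]
  · refine Finset.sum_congr rfl fun i _ => ?_
    simp [Finset.card_product]
  · intro x _ y _ hxy
    simp only [Finset.disjoint_left]
    rintro ⟨a, b⟩ ha hb
    simp only [Finset.mem_product, Finset.mem_singleton] at ha hb
    exact hxy (ha.1.symm.trans hb.1)

lemma adj_symm : Symmetric Adj := by
  rintro ⟨a1, a2⟩ ⟨b1, b2⟩ h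
  unfold Adj at *
  simp only at *
  omega

lemma chain_symm (s : Set (ℕ × ℕ)) :
    Symmetric (Relation.ReflTransGen (fun x y => x ∈ s ∧ y ∈ s ∧ Adj x y)) :=
  by
    haveI : Std.Symm (fun x y : ℕ × ℕ => x ∈ s ∧ y ∈ s ∧ Adj x y) :=
      ⟨fun x y ⟨h1, h2, h3⟩ => ⟨h2, h1, adj_symm h3⟩⟩
    exact fun a b h => Relation.ReflTransGen.symmetric.symm a b h

lemma walk_right (μ ν : SeqPartition) :
    ∀ (d i j : ℕ), (i, j) ∈ cells μ ν → (i, j + d) ∈ cells μ ν →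
      Relation.ReflTransGen (fun x y => x ∈ cells μ ν ∧ y ∈ cells μ ν ∧ Adj x y)
        (i, j) (i, j + d) := by
  intro d
  induction d with
  | zero => intro i j h _; exact Relation.ReflTransGen.refl
  | succ d ih =>
    intro i j h1 h2
    simp only [cells, Set.mem_setOf_eq] at h1 h2
    have hmid : (i, j + 1) ∈ cells μ ν := by
      simp only [cells, Set.mem_setOf_eq]; omega
    have h1' : (i, j) ∈ cells μ ν := by
      simp only [cells, Set.mem_setOf_eq]; exact h1
    have step : Relation.ReflTransGen (fun x y => x ∈ cells μ ν ∧ y ∈ cells μ ν ∧ Adj x y)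
        (i, j) (i, j + 1) :=
      Relation.ReflTransGen.single ⟨h1', hmid, Or.inl ⟨rfl, Or.inl rfl⟩⟩
    have heq : j + (d + 1) = (j + 1) + d := by omega
    rw [heq]
    refine step.trans (ih i (j + 1) hmid ?_)
    rw [← heq]
    simp only [cells, Set.mem_setOf_eq]; exact h2

lemma row_conn (μ ν : SeqPartition) {i j j' : ℕ} (h1 : (i, j) ∈ cells μ ν)
    (h2 : (i, j') ∈ cells μ ν) :
    Relation.ReflTransGen (fun x y => x ∈ cells μ ν ∧ y ∈ cells μ ν ∧ Adj x y)
      (i, j) (i, j') := by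
  rcases le_or_gt j j' with h | h
  · have : j' = j + (j' - j) := by omega
    rw [this] at h2 ⊢
    exact walk_right μ ν _ i j h1 h2
  · have : j = j' + (j - j') := by omega
    rw [this] at h1
    refine chain_symm _ ?_
    rw [this]
    exact walk_right μ ν _ i j' h2 h1

lemma cross_row {s : Set (ℕ × ℕ)} {a b : ℕ × ℕ}
    (h : Relation.ReflTransGen (fun x y => x ∈ s ∧ y ∈ s ∧ Adj x y) a b) (ha : a ∈ s) :
    ∀ k, a.1 ≤ k → k ≤ b.1 → ∃ c ∈ s, c.1 = k := by
  induction h with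
  | refl => intro k h1 h2; exact ⟨a, ha, by omega⟩
  | tail _ hstep ih =>
    rename_i b' c _
    intro k h1 h2
    obtain ⟨hb', hc, hadj⟩ := hstep
    rcases le_or_gt k b'.1 with h | h
    · exact ih k h1 h
    · rcases hadj with ⟨e1, _⟩ | ⟨e1, e2 | e2⟩
      · omega
      · exact ⟨c, hc, by omega⟩
      · omega

lemma cross_vert {s : Set (ℕ × ℕ)} {a b : ℕ × ℕ}
    (h : Relation.ReflTransGen (fun x y => x ∈ s ∧ y ∈ s ∧ Adj x y) a b) :
    ∀ k, a.1 ≤ k → k + 1 ≤ b.1 → ∃ j, (k, j) ∈ s ∧ (k + 1, j) ∈ s := by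
  induction h with
  | refl => intro k h1 h2; omega
  | tail _ hstep ih =>
    rename_i b' c _
    intro k h1 h2
    obtain ⟨hb', hc, hadj⟩ := hstep
    rcases le_or_gt (k + 1) b'.1 with h | h
    · exact ih k h1 h
    · rcases hadj with ⟨e1, _⟩ | ⟨e1, e2 | e2⟩
      · omega
      · -- b'.1 + 1 = c.1, so b'.1 = k, c.1 = k + 1
        refine ⟨b'.2, ?_, ?_⟩
        · have : b' = (k, b'.2) := by
            rw [Prod.ext_iff]; constructor
            · simp only; omega
            · rfl
          rwa [← this]
        · have : c = (k + 1, b'.2) := by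
            rw [Prod.ext_iff]; constructor
            · simp only; omega
            · simp only; omega
          rwa [← this]
      · omega

noncomputable def hookRm (p : SeqPartition) : SeqPartition where
  f := fun i => if i = 0 then 0 else p.f (i + 1) - 1
  f_zero := by simp
  antitone := by
    intro i j h1 h2
    show (if j = 0 then 0 else p.f (j + 1) - 1) ≤ (if i = 0 then 0 else p.f (i + 1) - 1)
    rw [if_neg (by omega), if_neg (by omega)]
    exact Nat.sub_le_sub_right (p.antitone (i := i + 1) (by omega) (by omega)) 1
  ev_zero := by
    obtain ⟨N, hN⟩ := p.ev_zero
    exact ⟨N, fun i hi => by show (if i = 0 then 0 else p.f (i + 1) - 1) = 0; rw [hN (i + 1) (by omega)]; simp⟩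

lemma hookRm_f (p : SeqPartition) {i : ℕ} (h : 1 ≤ i) : (hookRm p).f i = p.f (i + 1) - 1 := by
  simp only [hookRm]; rw [if_neg (by omega)]

lemma hookRm_sub (p : SeqPartition) : Sub (hookRm p) p := by
  intro i
  rcases Nat.eq_zero_or_pos i with h | h
  · subst h; rw [(hookRm p).f_zero]; exact Nat.zero_le _
  · rw [hookRm_f p h]
    have := p.antitone (i := i) (j := i + 1) h (by omega)
    omega

lemma hookRm_box (p : SeqPartition) (hL : 0 < p.len) : (p.len, 1) ∈ cells p (hookRm p) := by
  refine ⟨hL, ?_, p.f_pos hL (le_refl _)⟩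
  simp only
  rw [hookRm_f p hL, p.f_eq_zero_of_len_lt (by omega)]
  simp

lemma hookRm_mem (p : SeqPartition) {i j : ℕ} :
    (i, j) ∈ cells p (hookRm p) ↔ 1 ≤ i ∧ p.f (i + 1) - 1 < j ∧ j ≤ p.f i := by
  constructor
  · rintro ⟨h1, h2, h3⟩
    simp only at h1 h2 h3
    rw [hookRm_f p h1] at h2
    exact ⟨h1, h2, h3⟩
  · rintro ⟨h1, h2, h3⟩
    exact ⟨h1, by simp only; rw [hookRm_f p h1]; exact h2, h3⟩

lemma hookRm_no2x2 (p : SeqPartition) :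
    ¬ ∃ i j : ℕ, (i, j) ∈ cells p (hookRm p) ∧ (i + 1, j) ∈ cells p (hookRm p) ∧
      (i, j + 1) ∈ cells p (hookRm p) ∧ (i + 1, j + 1) ∈ cells p (hookRm p) := by
  rintro ⟨i, j, c1, _, _, c4⟩
  rw [hookRm_mem] at c1 c4
  omega

lemma hookRm_conn_aux (p : SeqPartition) (hL : 0 < p.len) :
    ∀ (m : ℕ) (c : ℕ × ℕ), c ∈ cells p (hookRm p) → p.len ≤ c.1 + m →
      Relation.ReflTransGen
        (fun x y => x ∈ cells p (hookRm p) ∧ y ∈ cells p (hookRm p) ∧ Adj x y)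
        c (p.len, 1) := by
  intro m
  induction m with
  | zero =>
    rintro ⟨i, j⟩ hc hm
    rw [hookRm_mem] at hc
    have hiL : i = p.len := le_antisymm (p.le_len (by omega)) (by omega)
    subst hiL
    exact row_conn p (hookRm p) (hookRm_mem p |>.mpr hc) (hookRm_box p hL)
  | succ m ih =>
    rintro ⟨i, j⟩ hc hm
    rw [hookRm_mem] at hc
    rcases le_or_gt p.len i with h | h
    · have hiL : i = p.len := le_antisymm (p.le_len (by omega)) h
      subst hiL
      exact row_conn p (hookRm p) (hookRm_mem p |>.mpr hc) (hookRm_box p hL)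
    · set x := p.f (i + 1) with hx
      have hx1 : 1 ≤ x := p.f_pos (by omega) (by omega)
      have hix : (i, x) ∈ cells p (hookRm p) := by
        rw [hookRm_mem]
        refine ⟨hc.1, by omega, ?_⟩
        exact p.antitone (i := i) (j := i + 1) hc.1 (by omega)
      have hix' : (i + 1, x) ∈ cells p (hookRm p) := by
        rw [hookRm_mem]
        have := p.antitone (i := i + 1) (j := i + 1 + 1) (by omega) (by omega)
        exact ⟨by omega, by omega, le_refl _⟩
      have step : Relation.ReflTransGen
          (fun x y => x ∈ cells p (hookRm p) ∧ y ∈ cells p (hookRm p) ∧ Adj x y)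
          (i, x) (i + 1, x) :=
        Relation.ReflTransGen.single ⟨hix, hix', Or.inr ⟨rfl, Or.inl rfl⟩⟩
      exact ((row_conn p (hookRm p) (hookRm_mem p |>.mpr hc) hix).trans step).trans
        (ih (i + 1, x) hix' (by simp only; omega))

lemma hookRm_strip (p : SeqPartition) (hL : 0 < p.len) :
    IsBorderStrip p (hookRm p) := by
  refine ⟨hookRm_sub p, ⟨_, hookRm_box p hL⟩, ?_, hookRm_no2x2 p⟩
  intro a ha b hb
  exact (hookRm_conn_aux p hL p.len ⟨a.1, a.2⟩ (by rwa [Prod.mk.eta]) (by omega)).trans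
    (chain_symm _ (hookRm_conn_aux p hL p.len ⟨b.1, b.2⟩ (by rwa [Prod.mk.eta]) (by omega)))

lemma hookRm_size (p : SeqPartition) (hL : 0 < p.len) (h1 : p.f 1 = p.len) :
    stripSize p (hookRm p) = 2 * p.len - 1 := by
  rw [stripSize_eq, sum_tele p.f (hookRm p).f p.len (p.len - 1) 1 (by omega) ?_ ?_]
  · omega
  · intro i hi1 hi2
    rw [hookRm_f p hi1]
    have hpos := p.f_pos (i := i + 1) (by omega) (by omega)
    exact ⟨by omega, p.antitone (i := i) (j := i + 1) hi1 (by omega)⟩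
  · rw [hookRm_f p hL, p.f_eq_zero_of_len_lt (by omega)]

lemma hookRm_selfConj (p : SeqPartition) (hsc : ∀ j, p.f j = conjFun p.f j) :
    ∀ j, (hookRm p).f j = conjFun (hookRm p).f j := by
  intro j
  rcases Nat.eq_zero_or_pos j with hj | hj
  · subst hj; rw [(hookRm p).f_zero, conj_zero]
  · obtain ⟨A, B⟩ := p.conj_extract (j := j + 1) (by omega)
    rw [← hsc (j + 1)] at A B
    rw [hookRm_f p hj]
    refine (conj_val (hookRm p) hj ?_ ?_).symm
    · rcases Nat.eq_zero_or_pos (p.f (j + 1) - 1) with ht | ht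
      · exact Or.inl ht
      · refine Or.inr ?_
        rw [hookRm_f p (by omega)]
        have hA := A (by omega)
        have : p.f (j + 1) - 1 + 1 = p.f (j + 1) := by omega
        rw [this]
        omega
    · rw [hookRm_f p (by omega)]
      rcases Nat.eq_zero_or_pos (p.f (j + 1)) with h0 | h0
      · -- t = 0, B : p.f 1 < j + 1
        rw [h0] at B ⊢
        norm_num at B ⊢
        have := p.antitone (i := 1) (j := 2) (le_refl 1) (by omega)
        omega
      · have : p.f (j + 1) - 1 + 1 = p.f (j + 1) := by omega
        rw [this]
        omega

lemma hookRm_len (p : SeqPartition) (hL : 0 < p.len) : (hookRm p).len ≤ p.len - 1 := by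
  refine len_le_of _ _ fun i hi => ?_
  rw [hookRm_f p (by omega), p.f_eq_zero_of_len_lt (by omega)]

lemma exists_mod : ∀ (n : ℕ) (p : SeqPartition), p.len ≤ n →
    (∀ j, p.f j = conjFun p.f j) → ∃ i, ModRuleO p i := by
  intro n
  induction n with
  | zero => intro p hn _; exact ⟨0, .base p (by omega)⟩
  | succ n ih =>
    intro p hn hsc
    rcases Nat.eq_zero_or_pos p.len with hL | hL
    · exact ⟨0, .base p hL⟩
    · have hf1 : p.f 1 = p.len := by rw [hsc 1, ← len_eq_conj_one]
      obtain ⟨i, hi⟩ := ih (hookRm p) (by have := hookRm_len p hL; omega)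
        (hookRm_selfConj p hsc)
      exact ⟨_, .step p (hookRm p) i hL (hookRm_strip p hL) (hookRm_size p hL hf1)
        (hookRm_box p hL) hi⟩

lemma mem_cells {μ ν : SeqPartition} {i j : ℕ} :
    (i, j) ∈ cells μ ν ↔ 1 ≤ i ∧ ν.f i < j ∧ j ≤ μ.f i := Iff.rfl

lemma selfConj_of_mod {p : SeqPartition} {i : ℕ} (h : ModRuleO p i) :
    ∀ j, p.f j = conjFun p.f j := by
  induction h with
  | base μ h =>
    have hz : ∀ k, μ.f k = 0 := by
      intro k
      by_contra hc
      have := μ.le_len hc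
      have hk : k = 0 := by omega
      rw [hk, μ.f_zero] at hc
      exact hc rfl
    intro j
    rcases Nat.eq_zero_or_pos j with hj | hj
    · rw [hz j, hj, conj_zero]
    · rw [hz j]
      refine (conj_val μ hj (Or.inl rfl) ?_).symm
      rw [hz (0 + 1)]; omega
  | step μ ν i hlen hbs hsize hbox hrec ih =>
    set L := μ.len with hLdef
    obtain ⟨hsub, hne, hconn, h2x2⟩ := hbs
    rw [mem_cells] at hbox
    have hνL : ν.f L = 0 := by omega
    have hex : ∃ k, ν.f k < μ.f k := ⟨L, by omega⟩
    set r := Nat.find hex with hrdef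
    have hPr : ν.f r < μ.f r := Nat.find_spec hex
    have hmin : ∀ k, k < r → ¬(ν.f k < μ.f k) := fun k hk => Nat.find_min hex hk
    have hr1 : 1 ≤ r := by
      by_contra hc
      have hr0 : r = 0 := by omega
      rw [hr0, ν.f_zero, μ.f_zero] at hPr
      omega
    have hrL : r ≤ L := Nat.find_min' hex (by omega)
    have ha0 : (r, ν.f r + 1) ∈ cells μ ν := mem_cells.mpr ⟨hr1, by omega, by omega⟩
    have chain₀ := hconn _ ha0 _ (mem_cells.mpr hbox)
    -- all rows between r and L are nonempty
    have hP : ∀ k, r ≤ k → k ≤ L → ν.f k < μ.f k := by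
      intro k h1 h2
      obtain ⟨c, hc, hci⟩ := cross_row chain₀ ha0 k h1 h2
      obtain ⟨d1, d2, d3⟩ := hc
      rw [hci] at d2 d3
      omega
    -- the strip is forced
    have hF : ∀ k, r ≤ k → k < L → ν.f k + 1 = μ.f (k + 1) := by
      intro k h1 h2
      obtain ⟨j, hj1, hj2⟩ := cross_vert chain₀ k h1 h2
      rw [mem_cells] at hj1 hj2
      have hμm : μ.f (k + 1) ≤ μ.f k := μ.antitone (by omega) (by omega)
      have hνm : ν.f (k + 1) ≤ ν.f k := ν.antitone (by omega) (by omega)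
      by_contra hc
      refine h2x2 ⟨k, ν.f k + 1, mem_cells.mpr ⟨by omega, by omega, by omega⟩,
        mem_cells.mpr ⟨by omega, by omega, by omega⟩,
        mem_cells.mpr ⟨by omega, by omega, by omega⟩,
        mem_cells.mpr ⟨by omega, by omega, by omega⟩⟩
    have hEq : ∀ k, k < r → ν.f k = μ.f k :=
      fun k hk => le_antisymm (hsub k) (le_of_not_gt (hmin k hk))
    -- compute the strip size
    rw [stripSize_eq] at hsize
    have hres : ∑ k ∈ Finset.Icc 1 L, (μ.f k - ν.f k) = ∑ k ∈ Finset.Icc r L, (μ.f k - ν.f k) := by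
      refine (Finset.sum_subset (Finset.Icc_subset_Icc_left hr1) fun x hx hnx => ?_).symm
      simp only [Finset.mem_Icc] at hx hnx
      have := hEq x (by omega)
      omega
    have hsum := sum_tele μ.f ν.f L (L - r) r (by omega)
      (fun k h1 h2 => ⟨hF k h1 h2, μ.antitone (by omega) (by omega)⟩) hνL
    have hμr : μ.f r = L + r - 1 := by
      rw [hres, hsum] at hsize
      omega
    -- r must equal 1
    rcases Nat.lt_or_ge r 2 with hr2 | hr2
    swap
    · exfalso
      have hν1 : ν.f 1 = μ.f 1 := hEq 1 (by omega)
      have hmono : μ.f r ≤ μ.f 1 := μ.antitone (le_refl 1) (by omega)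
      have hν0 : ∀ k, L - 1 < k → ν.f k = 0 := by
        intro k hk
        have := ν.antitone (i := L) (j := k) (by omega) (by omega)
        omega
      have hlenν : ν.len ≤ L - 1 := len_le_of ν (L - 1) hν0
      have := ih 1
      rw [← len_eq_conj_one] at this
      omega
    · have hr : r = 1 := by omega
      rw [hr] at hμr hF
      have hμ1 : μ.f 1 = L := by omega
      intro j
      rcases Nat.eq_zero_or_pos j with hj | hj
      · rw [hj, μ.f_zero, conj_zero]
      rcases Nat.lt_or_ge L j with hjL | hjL
      · rw [μ.f_eq_zero_of_len_lt hjL]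
        refine (conj_val μ hj (Or.inl rfl) ?_).symm
        rw [Nat.zero_add, hμ1]
        omega
      rcases Nat.lt_or_ge j 2 with hj2 | hj2
      · have hj1 : j = 1 := by omega
        rw [hj1, hμ1, hLdef, len_eq_conj_one]
      -- 2 ≤ j ≤ L
      · have hL2 : 2 ≤ L := by omega
        have hsj : ν.f (j - 1) + 1 = μ.f j := by
          have := hF (j - 1) (by omega) (by omega)
          rwa [show j - 1 + 1 = j from by omega] at this
        obtain ⟨hx1, hx2⟩ := conj_extract ν (j := j - 1) (by omega)
        rw [← ih (j - 1)] at hx1 hx2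
        have hν1b : ν.f 1 + 1 = μ.f 2 := hF 1 (le_refl 1) (by omega)
        have hμ2 : μ.f 2 ≤ μ.f 1 := μ.antitone (le_refl 1) (by omega)
        have hmono : ν.f (j - 1) ≤ ν.f 1 := ν.antitone (le_refl 1) (by omega)
        have hsb : ν.f (j - 1) ≤ L - 1 := by omega
        have hval : conjFun μ.f j = ν.f (j - 1) + 1 := by
          refine conj_val μ hj (Or.inr ?_) ?_
          · rcases Nat.eq_zero_or_pos (ν.f (j - 1)) with h0 | h0
            · rw [h0, Nat.zero_add, hμ1]; omega
            · have := hF (ν.f (j - 1)) h0 (by omega)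
              have := hx1 (by omega)
              omega
          · rcases Nat.lt_or_ge (ν.f (j - 1) + 1) L with hlt | hge
            · have := hF (ν.f (j - 1) + 1) (by omega) hlt
              omega
            · rw [μ.f_eq_zero_of_len_lt (by omega)]
              omega
        rw [hval]
        omega

end SeqPartition

open SeqPartition in
/-- `i₁(λ) < ∞` if and only if `λ` is self-conjugate. -/
theorem statement10 (lam : SeqPartition) :
    i1 lam < ⊤ ↔ ∀ j : ℕ, lam.f j = conjFun lam.f j := by
  constructor
  · intro h
    have hne : {c | ∃ i, ModRuleO lam i ∧ c = (i : ℕ∞)}.Nonempty := by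
      by_contra hc
      rw [Set.not_nonempty_iff_eq_empty] at hc
      rw [i1, hc, sInf_empty] at h
      exact lt_irrefl ⊤ h
    obtain ⟨c, i, hmod, rfl⟩ := hne
    exact selfConj_of_mod hmod
  · intro h
    obtain ⟨i, hi⟩ := exists_mod lam.len lam (le_refl _) h
    calc i1 lam ≤ (i : ℕ∞) := sInf_le ⟨i, hi, rfl⟩
      _ < ⊤ := ENat.coe_lt_top i
end

section
/- Let λ be a self-conjugate partition (λ = λ†). Then i₁(λ) = (|λ| − rank(λ))/2, where rank(λ) = #{i : λ_i ≥ i} is the number of boxes on the main diagonal of the Young diagram of λ. -/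
/-- A partition: a weakly decreasing sequence of nonnegative integers, indexed starting at 1
(`f 0 = 0` by convention), with finitely many nonzero terms. `f i` is the part `λ_i`. -/
structure YPartition where
  f : ℕ → ℕ
  f_zero : f 0 = 0
  antitone : ∀ ⦃i j : ℕ⦄, 1 ≤ i → i ≤ j → f j ≤ f i
  ev_zero : ∃ N, ∀ i, N ≤ i → f i = 0

namespace YPartition

/-- The number of nonzero parts `ℓ(λ)`. -/
noncomputable def len (p : YPartition) : ℕ := sSup {i | p.f i ≠ 0}

/-- The size `|λ| = Σ_i λ_i`. -/
noncomputable def size (p : YPartition) : ℕ := ∑ᶠ i, p.f i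

/-- The transpose (conjugate): `g† j = #{i ≥ 1 : g i ≥ j}`. -/
noncomputable def conjFun (g : ℕ → ℕ) (j : ℕ) : ℕ := Set.ncard {i | 1 ≤ i ∧ j ≤ g i}

/-- Containment of partitions: `ν ⊆ μ`. -/
def Sub (ν μ : YPartition) : Prop := ∀ i, ν.f i ≤ μ.f i

/-- The cells (boxes) of the skew diagram `μ/ν`: pairs `(i,j)` with `i ≥ 1` and
`ν_i < j ≤ μ_i`. -/
def cells (μ ν : YPartition) : Set (ℕ × ℕ) :=
  {c | 1 ≤ c.1 ∧ ν.f c.1 < c.2 ∧ c.2 ≤ μ.f c.1}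

/-- Two boxes share an edge. -/
def Adj (a b : ℕ × ℕ) : Prop :=
  (a.1 = b.1 ∧ (a.2 + 1 = b.2 ∨ b.2 + 1 = a.2)) ∨
  (a.2 = b.2 ∧ (a.1 + 1 = b.1 ∨ b.1 + 1 = a.1))

/-- A set of boxes is connected if any two of its boxes are joined by a chain of its
boxes, each sharing an edge with the next. -/
def IsConnected (s : Set (ℕ × ℕ)) : Prop :=
  ∀ a ∈ s, ∀ b ∈ s, Relation.ReflTransGen (fun x y => x ∈ s ∧ y ∈ s ∧ Adj x y) a b

/-- `μ/ν` is a border strip: `ν ⊆ μ`, and the skew diagram is nonempty, connected,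
and contains no 2×2 square. -/
def IsBorderStrip (μ ν : YPartition) : Prop :=
  Sub ν μ ∧ (cells μ ν).Nonempty ∧ IsConnected (cells μ ν) ∧
    ¬ ∃ i j : ℕ, (i, j) ∈ cells μ ν ∧ (i + 1, j) ∈ cells μ ν ∧
      (i, j + 1) ∈ cells μ ν ∧ (i + 1, j + 1) ∈ cells μ ν

/-- The number of boxes of `μ/ν`. -/
noncomputable def stripSize (μ ν : YPartition) : ℕ := (cells μ ν).ncard

/-- The number of rows that `μ/ν` occupies. -/
noncomputable def rows (μ ν : YPartition) : ℕ := (Prod.fst '' cells μ ν).ncard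

/-- The number of columns that `μ/ν` occupies. -/
noncomputable def cols (μ ν : YPartition) : ℕ := (Prod.snd '' cells μ ν).ncard

/-- The graph of the symplectic modification rule: `ModRule n μ i τ` holds iff
`i_{2n}(μ) = i < ∞` and `τ_{2n}(μ) = τ`. -/
inductive ModRule (n : ℕ) : YPartition → ℕ → YPartition → Prop
  | base (μ : YPartition) (h : μ.len ≤ n) : ModRule n μ 0 μ
  | step (μ ν τ : YPartition) (i : ℕ)
      (hlen : n < μ.len)
      (hbs : IsBorderStrip μ ν)
      (hsize : stripSize μ ν = 2 * (μ.len - n - 1))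
      (hbox : (μ.len, 1) ∈ cells μ ν)
      (hrec : ModRule n ν i τ) :
      ModRule n μ (cols μ ν + i) τ

/-- `i_{2n}(μ) ∈ ℕ∞`; it is `⊤ = ∞` exactly when the modification rule fails. -/
noncomputable def i2 (n : ℕ) (μ : YPartition) : ℕ∞ :=
  sInf {c | ∃ i τ, ModRule n μ i τ ∧ c = (i : ℕ∞)}

-- `τ_{2n}(μ)`, defined (arbitrarily, as `μ` itself) when `i_{2n}(μ) = ∞`.
open Classical in
noncomputable def tau (n : ℕ) (μ : YPartition) : YPartition :=
  if h : ∃ it : ℕ × YPartition, ModRule n μ it.1 it.2 then h.choose.2 else μ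

end YPartition

namespace YPartition

/-- The graph of the odd orthogonal (`O(1)`) modification rule: `ModRuleO μ i` holds iff
`i₁(μ) = i < ∞`.  Here one removes border strips of size `2ℓ(μ) - 1` containing the box
`(ℓ(μ), 1)`, and each removed strip with `c` columns contributes `c - 1`. -/
inductive ModRuleO : YPartition → ℕ → Prop
  | base (μ : YPartition) (h : μ.len = 0) : ModRuleO μ 0
  | step (μ ν : YPartition) (i : ℕ)
      (hlen : 0 < μ.len)
      (hbs : IsBorderStrip μ ν)
      (hsize : stripSize μ ν = 2 * μ.len - 1)
      (hbox : (μ.len, 1) ∈ cells μ ν)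
      (hrec : ModRuleO ν i) :
      ModRuleO μ (cols μ ν - 1 + i)

/-- `i₁(μ) ∈ ℕ∞`; it is `⊤ = ∞` exactly when the `O(1)` modification rule fails. -/
noncomputable def i1 (μ : YPartition) : ℕ∞ :=
  sInf {c | ∃ i, ModRuleO μ i ∧ c = (i : ℕ∞)}

end YPartition

namespace YPartition

/-- The rank of a partition: the number of boxes on the main diagonal. -/
noncomputable def rank (p : YPartition) : ℕ := Set.ncard {i | 1 ≤ i ∧ i ≤ p.f i}

end YPartition

namespace YPartition

theorem ext' {p q : YPartition} (h : p.f = q.f) : p = q := by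
  cases p; cases q; simpa using h

lemma supp_finite (p : YPartition) : {i | p.f i ≠ 0}.Finite := by
  obtain ⟨N, hN⟩ := p.ev_zero
  apply Set.Finite.subset (Set.finite_Iio N)
  intro i hi
  simp only [Set.mem_setOf_eq] at hi
  simp only [Set.mem_Iio]
  by_contra h
  exact hi (hN i (by omega))

lemma le_len (p : YPartition) {i : ℕ} (h : p.f i ≠ 0) : i ≤ p.len :=
  le_csSup (p.supp_finite.bddAbove) h

lemma f_eq_zero_of_len_lt (p : YPartition) {i : ℕ} (h : p.len < i) : p.f i = 0 := by
  by_contra hc; exact absurd (p.le_len hc) (by omega)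

lemma f_len_ne (p : YPartition) (h : 0 < p.len) : p.f p.len ≠ 0 := by
  have hne : {i | p.f i ≠ 0}.Nonempty := by
    by_contra hc
    rw [Set.not_nonempty_iff_eq_empty] at hc
    have : p.len = 0 := by rw [len, hc]; exact csSup_empty
    omega
  exact Nat.sSup_mem hne p.supp_finite.bddAbove

lemma f_pos (p : YPartition) {i : ℕ} (h1 : 1 ≤ i) (h2 : i ≤ p.len) : 0 < p.f i := by
  have := p.antitone h1 h2
  have := p.f_len_ne (by omega)
  omega

lemma one_le_of_f_ne (p : YPartition) {i : ℕ} (h : p.f i ≠ 0) : 1 ≤ i := by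
  rcases Nat.eq_zero_or_pos i with rfl | h'
  · exact absurd p.f_zero h
  · exact h'

lemma ncard_Icc' (a b : ℕ) : (Set.Icc a b).ncard = b + 1 - a := by
  rw [← Finset.coe_Icc, Set.ncard_coe_finset, Nat.card_Icc]

lemma galois (p : YPartition) {i j : ℕ} (hi : 1 ≤ i) (hj : 1 ≤ j) :
    j ≤ p.f i ↔ i ≤ conjFun p.f j := by
  have hfin : {k | 1 ≤ k ∧ j ≤ p.f k}.Finite := by
    apply p.supp_finite.subset
    intro k hk
    simp only [Set.mem_setOf_eq] at hk ⊢
    omega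
  constructor
  · intro h
    have hsub : Set.Icc 1 i ⊆ {k | 1 ≤ k ∧ j ≤ p.f k} := by
      intro k hk
      simp only [Set.mem_Icc] at hk
      exact ⟨hk.1, le_trans h (p.antitone hk.1 hk.2)⟩
    calc i = (Set.Icc 1 i).ncard := by rw [ncard_Icc']; omega
    _ ≤ _ := Set.ncard_le_ncard hsub hfin
  · intro h
    by_contra hc
    push_neg at hc
    have hsub : {k | 1 ≤ k ∧ j ≤ p.f k} ⊆ Set.Icc 1 (i - 1) := by
      intro k hk
      simp only [Set.mem_setOf_eq] at hk
      simp only [Set.mem_Icc]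
      refine ⟨hk.1, ?_⟩
      by_contra hk2
      have : p.f k ≤ p.f i := p.antitone hi (by omega)
      omega
    have := Set.ncard_le_ncard hsub (Set.finite_Icc _ _)
    rw [ncard_Icc'] at this
    unfold conjFun at h
    omega

lemma symm_iff (p : YPartition) (hself : ∀ j, p.f j = conjFun p.f j)
    {i j : ℕ} (hi : 1 ≤ i) (hj : 1 ≤ j) : j ≤ p.f i ↔ i ≤ p.f j := by
  rw [p.galois hi hj, ← hself j]

lemma f_one_eq_len (p : YPartition) (hself : ∀ j, p.f j = conjFun p.f j) :
    p.f 1 = p.len := by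
  rcases Nat.eq_zero_or_pos p.len with h0 | hpos
  · rcases Nat.eq_zero_or_pos (p.f 1) with h1 | h1
    · omega
    · have := p.le_len (i := 1) (by omega); omega
  · have h1 : p.len ≤ p.f 1 := by
      rw [← p.symm_iff hself hpos le_rfl]
      have := p.f_len_ne hpos; omega
    have h2 : p.f 1 ≤ p.len := by
      apply p.le_len
      have h3 : 1 ≤ p.f 1 := by omega
      have := (p.symm_iff hself h3 le_rfl).mpr le_rfl
      omega
    omega

lemma len_le_len {p q : YPartition} (h : ∀ i, p.f i ≤ q.f i) : p.len ≤ q.len := by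
  rcases Nat.eq_zero_or_pos p.len with h0 | hpos
  · omega
  · apply q.le_len (i := p.len)
    have := p.f_len_ne hpos
    have := h p.len
    omega

end YPartition

namespace YPartition

lemma size_eq_sum (p : YPartition) {L : ℕ} (hL : p.len ≤ L) :
    p.size = ∑ i ∈ Finset.Icc 1 L, p.f i := by
  apply finsum_eq_sum_of_support_subset
  intro i hi
  simp only [Function.mem_support] at hi
  simp only [Finset.coe_Icc, Set.mem_Icc]
  exact ⟨p.one_le_of_f_ne hi, le_trans (p.le_len hi) hL⟩

/-- the cells of `μ/ν` as a finset, assuming `μ.len ≤ L` -/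
noncomputable def cellsFinset (μ ν : YPartition) (L : ℕ) : Finset (ℕ × ℕ) :=
  (Finset.Icc 1 L).biUnion (fun i => (Finset.Ioc (ν.f i) (μ.f i)).image (fun j => (i, j)))

lemma mem_cellsFinset {μ ν : YPartition} {L : ℕ} {c : ℕ × ℕ} :
    c ∈ cellsFinset μ ν L ↔ (1 ≤ c.1 ∧ c.1 ≤ L) ∧ ν.f c.1 < c.2 ∧ c.2 ≤ μ.f c.1 := by
  obtain ⟨i, j⟩ := c
  simp only [cellsFinset, Finset.mem_biUnion, Finset.mem_image, Finset.mem_Icc,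
    Finset.mem_Ioc, Prod.mk.injEq]
  constructor
  · rintro ⟨a, ha, b, hb, rfl, rfl⟩
    exact ⟨ha, hb⟩
  · rintro ⟨ha, hb⟩
    exact ⟨i, ha, j, hb, rfl, rfl⟩

lemma cells_eq_coe (μ ν : YPartition) {L : ℕ} (hL : μ.len ≤ L) :
    cells μ ν = ↑(cellsFinset μ ν L) := by
  ext ⟨i, j⟩
  simp only [cells, Set.mem_setOf_eq, Finset.coe_sort_coe, Finset.mem_coe, mem_cellsFinset]
  constructor
  · rintro ⟨h1, h2, h3⟩
    have hne : μ.f i ≠ 0 := by omega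
    exact ⟨⟨h1, le_trans (μ.le_len hne) hL⟩, h2, h3⟩
  · rintro ⟨⟨h1, _⟩, h2, h3⟩
    exact ⟨h1, h2, h3⟩

lemma stripSize_eq_sum (μ ν : YPartition) {L : ℕ} (hL : μ.len ≤ L) :
    stripSize μ ν = ∑ i ∈ Finset.Icc 1 L, (μ.f i - ν.f i) := by
  rw [stripSize, cells_eq_coe μ ν hL, Set.ncard_coe_finset, cellsFinset, Finset.card_biUnion]
  · apply Finset.sum_congr rfl
    intro i _
    rw [Finset.card_image_of_injective _ (fun a b h => by simpa using h), Nat.card_Ioc]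
  · intro a _ b _ hab
    rw [Function.onFun, Finset.disjoint_left]
    intro c hc hc'
    simp only [Finset.mem_image, Finset.mem_Ioc] at hc hc'
    obtain ⟨x, _, rfl⟩ := hc
    obtain ⟨y, _, h⟩ := hc'
    exact hab (by simpa using (congrArg Prod.fst h).symm)

lemma size_eq_add (μ ν : YPartition) (hsub : Sub ν μ) :
    μ.size = ν.size + stripSize μ ν := by
  have hνL : ν.len ≤ μ.len := len_le_len hsub
  rw [size_eq_sum μ (le_refl μ.len), size_eq_sum ν hνL, stripSize_eq_sum μ ν (le_refl μ.len),
    ← Finset.sum_add_distrib]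
  apply Finset.sum_congr rfl
  intro i _
  have := hsub i
  omega

/-- `λ` minus its first principal hook. -/
noncomputable def hookSub (lam : YPartition) : YPartition where
  f i := if i = 0 then 0 else lam.f (i + 1) - 1
  f_zero := rfl
  antitone := by
    intro i j hi hij
    rw [if_neg (by omega), if_neg (by omega)]
    exact Nat.sub_le_sub_right (lam.antitone (by omega) (by omega)) 1
  ev_zero := by
    obtain ⟨N, hN⟩ := lam.ev_zero
    refine ⟨N + 1, fun i hi => ?_⟩
    rcases Nat.eq_zero_or_pos i with rfl | h
    · rfl
    · rw [if_neg (by omega), hN (i + 1) (by omega)]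

lemma hookSub_f (lam : YPartition) {i : ℕ} (hi : 1 ≤ i) :
    (hookSub lam).f i = lam.f (i + 1) - 1 := if_neg (by omega)

lemma hookSub_sub (lam : YPartition) : Sub (hookSub lam) lam := by
  intro i
  rcases Nat.eq_zero_or_pos i with rfl | h
  · simp [hookSub, lam.f_zero]
  · rw [hookSub_f lam h]
    have := lam.antitone h (show i ≤ i + 1 by omega)
    omega

lemma mem_cells_hookSub (lam : YPartition) {i j : ℕ} :
    (i, j) ∈ cells lam (hookSub lam) ↔ 1 ≤ i ∧ 1 ≤ j ∧ lam.f (i + 1) ≤ j ∧ j ≤ lam.f i := by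
  simp only [cells, Set.mem_setOf_eq]
  constructor
  · rintro ⟨h1, h2, h3⟩
    rw [hookSub_f lam h1] at h2
    exact ⟨h1, by omega, by omega, h3⟩
  · rintro ⟨h1, h2, h3, h4⟩
    rw [hookSub_f lam h1]
    exact ⟨h1, by omega, h4⟩

lemma hookSub_self (lam : YPartition) (hself : ∀ j, lam.f j = conjFun lam.f j) :
    ∀ j, (hookSub lam).f j = conjFun (hookSub lam).f j := by
  intro j
  rcases Nat.eq_zero_or_pos j with rfl | hj
  · rw [(hookSub lam).f_zero, conjFun]
    have : {i | 1 ≤ i ∧ 0 ≤ (hookSub lam).f i} = Set.Ici 1 := by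
      ext i; simp
    rw [this]
    exact (Set.Ici_infinite 1).ncard.symm
  · have hset : {i | 1 ≤ i ∧ j ≤ (hookSub lam).f i} = Set.Icc 1 ((hookSub lam).f j) := by
      ext i
      simp only [Set.mem_setOf_eq, Set.mem_Icc]
      constructor
      · rintro ⟨hi, hji⟩
        rw [hookSub_f lam hi] at hji
        have h1 : j + 1 ≤ lam.f (i + 1) := by omega
        have h2 := (lam.symm_iff hself (show 1 ≤ i + 1 by omega) (show 1 ≤ j + 1 by omega)).mp h1
        rw [hookSub_f lam hj]
        exact ⟨hi, by omega⟩
      · rintro ⟨hi, hij⟩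
        rw [hookSub_f lam hj] at hij
        have h1 : i + 1 ≤ lam.f (j + 1) := by omega
        have h2 := (lam.symm_iff hself (show 1 ≤ j + 1 by omega) (show 1 ≤ i + 1 by omega)).mp h1
        rw [hookSub_f lam hi]
        exact ⟨hi, by omega⟩
    rw [conjFun, hset, ncard_Icc']
    omega

end YPartition

namespace YPartition

lemma sum_tele (lam : YPartition) :
    ∀ ℓ, 1 ≤ ℓ → ℓ < lam.len →
    ∑ i ∈ Finset.Icc 1 ℓ, (lam.f i - (lam.f (i + 1) - 1)) = lam.f 1 + ℓ - lam.f (ℓ + 1) := by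
  intro ℓ
  induction ℓ with
  | zero => omega
  | succ n ihn =>
    intro _ hlt
    rcases Nat.eq_zero_or_pos n with rfl | hn
    · rw [Finset.Icc_self, Finset.sum_singleton]
      norm_num
      have h2 : 0 < lam.f 2 := lam.f_pos (by omega) (by omega)
      have h21 : lam.f 2 ≤ lam.f 1 := lam.antitone (by omega) (by omega)
      omega
    · rw [Finset.sum_Icc_succ_top (by omega : 1 ≤ n + 1), ihn hn (by omega)]
      have h1 : 0 < lam.f (n + 1) := lam.f_pos (by omega) (by omega)
      have h2 : 0 < lam.f (n + 1 + 1) := lam.f_pos (by omega) (by omega)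
      have h3 : lam.f (n + 1 + 1) ≤ lam.f (n + 1) := lam.antitone (by omega) (by omega)
      have h4 : lam.f (n + 1) ≤ lam.f 1 := lam.antitone (by omega) (by omega)
      omega

lemma stripSize_hookSub (lam : YPartition) (hpos : 0 < lam.len)
    (hself : ∀ j, lam.f j = conjFun lam.f j) :
    stripSize lam (hookSub lam) = 2 * lam.len - 1 := by
  have h1len : lam.f 1 = lam.len := f_one_eq_len lam hself
  rw [stripSize_eq_sum lam (hookSub lam) (le_refl lam.len)]
  have hcongr : ∑ i ∈ Finset.Icc 1 lam.len, (lam.f i - (hookSub lam).f i)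
      = ∑ i ∈ Finset.Icc 1 lam.len, (lam.f i - (lam.f (i + 1) - 1)) := by
    apply Finset.sum_congr rfl
    intro i hi
    rw [Finset.mem_Icc] at hi
    rw [hookSub_f lam hi.1]
  rw [hcongr]
  rcases Nat.lt_or_ge lam.len 2 with hsmall | hbig
  · have hm : lam.len = 1 := by omega
    rw [hm, Finset.Icc_self, Finset.sum_singleton]
    have h2 : lam.f (1 + 1) = 0 := lam.f_eq_zero_of_len_lt (by omega)
    omega
  · obtain ⟨m, hmpos, hm⟩ : ∃ m, 1 ≤ m ∧ lam.len = m + 1 := ⟨lam.len - 1, by omega, by omega⟩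
    rw [hm, Finset.sum_Icc_succ_top (by omega : 1 ≤ m + 1),
      lam.sum_tele m hmpos (by omega)]
    have h1 : 0 < lam.f (m + 1) := lam.f_pos (by omega) (by omega)
    have h2 : lam.f (m + 1 + 1) = 0 := lam.f_eq_zero_of_len_lt (by omega)
    have h4 : lam.f (m + 1) ≤ lam.f 1 := lam.antitone (by omega) (by omega)
    omega

lemma size_hookSub (lam : YPartition) (hpos : 0 < lam.len)
    (hself : ∀ j, lam.f j = conjFun lam.f j) :
    lam.size = (hookSub lam).size + (2 * lam.len - 1) := by
  rw [size_eq_add lam (hookSub lam) (hookSub_sub lam), stripSize_hookSub lam hpos hself]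

lemma rank_set_finite (p : YPartition) : {i | 1 ≤ i ∧ i ≤ p.f i}.Finite := by
  apply p.supp_finite.subset
  intro i hi
  simp only [Set.mem_setOf_eq] at hi ⊢
  omega

lemma rank_eq_zero (p : YPartition) (h : p.len = 0) : p.rank = 0 := by
  have hset : {i | 1 ≤ i ∧ i ≤ p.f i} = ∅ := by
    ext i
    simp only [Set.mem_setOf_eq, Set.mem_empty_iff_false, iff_false, not_and]
    intro h1
    have := p.f_eq_zero_of_len_lt (i := i) (by omega)
    omega
  rw [rank, hset, Set.ncard_empty]

lemma size_eq_zero' (p : YPartition) (h : p.len = 0) : p.size = 0 := by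
  rw [p.size_eq_sum (le_of_eq h)]
  simp

lemma rank_hookSub (lam : YPartition) (hpos : 0 < lam.len)
    (hself : ∀ j, lam.f j = conjFun lam.f j) :
    lam.rank = (hookSub lam).rank + 1 := by
  have h1len : lam.f 1 = lam.len := f_one_eq_len lam hself
  have hset : {i | 1 ≤ i ∧ i ≤ lam.f i}
      = insert 1 ((fun x => x + 1) '' {i | 1 ≤ i ∧ i ≤ (hookSub lam).f i}) := by
    ext x
    simp only [Set.mem_setOf_eq, Set.mem_insert_iff, Set.mem_image]
    constructor
    · rintro ⟨hx, hxf⟩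
      by_cases h1 : x = 1
      · exact Or.inl h1
      · refine Or.inr ⟨x - 1, ⟨by omega, ?_⟩, by omega⟩
        rw [hookSub_f lam (by omega : 1 ≤ x - 1)]
        have hxx : x - 1 + 1 = x := by omega
        rw [hxx]
        omega
    · rintro (rfl | ⟨y, ⟨hy1, hy2⟩, rfl⟩)
      · exact ⟨le_rfl, by omega⟩
      · rw [hookSub_f lam hy1] at hy2
        exact ⟨by omega, by omega⟩
  have hfin : ((fun x => x + 1) '' {i | 1 ≤ i ∧ i ≤ (hookSub lam).f i}).Finite :=
    (hookSub lam).rank_set_finite.image _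
  have hnm : (1 : ℕ) ∉ (fun x => x + 1) '' {i | 1 ≤ i ∧ i ≤ (hookSub lam).f i} := by
    simp only [Set.mem_image, Set.mem_setOf_eq, not_exists, not_and]
    intro y hy h
    have h' : y + 1 = 1 := h
    omega
  rw [rank, hset, Set.ncard_insert_of_notMem hnm hfin, Set.ncard_image_of_injective _
    (add_left_injective 1)]
  rfl

lemma cols_hookSub (lam : YPartition) (hpos : 0 < lam.len)
    (hself : ∀ j, lam.f j = conjFun lam.f j) :
    cols lam (hookSub lam) = lam.len := by
  have h1len : lam.f 1 = lam.len := f_one_eq_len lam hself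
  have himg : Prod.snd '' cells lam (hookSub lam) = Set.Icc 1 lam.len := by
    ext j
    simp only [Set.mem_image, Set.mem_Icc]
    constructor
    · rintro ⟨⟨a, b⟩, hm, rfl⟩
      rw [mem_cells_hookSub] at hm
      obtain ⟨h1, h2, h3, h4⟩ := hm
      have := lam.antitone (le_refl 1) h1
      exact ⟨h2, by omega⟩
    · rintro ⟨hj1, hj2⟩
      refine ⟨(lam.f j, j), ?_, rfl⟩
      rw [mem_cells_hookSub]
      have hfj : 0 < lam.f j := lam.f_pos hj1 hj2
      refine ⟨hfj, hj1, ?_, (lam.symm_iff hself hfj hj1).mpr le_rfl⟩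
      by_contra hc
      push_neg at hc
      have := (lam.symm_iff hself (show 1 ≤ lam.f j + 1 by omega) hj1).mp (by omega)
      omega
  rw [cols, himg, ncard_Icc']
  omega

lemma adj_symm {a b : ℕ × ℕ} (h : Adj a b) : Adj b a := by
  unfold Adj at *; tauto

lemma reach (lam : YPartition) (hpos : 0 < lam.len) :
    ∀ k i j, (i, j) ∈ cells lam (hookSub lam) → 2 * (lam.len - i) + j ≤ k →
    Relation.ReflTransGen (fun x y => x ∈ cells lam (hookSub lam) ∧
      y ∈ cells lam (hookSub lam) ∧ Adj x y) (i, j) (lam.len, 1) := by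
  intro k
  induction k with
  | zero =>
    intro i j hm hk
    rw [mem_cells_hookSub] at hm
    omega
  | succ k ih =>
    intro i j hm hk
    have hm' := hm
    rw [mem_cells_hookSub] at hm'
    obtain ⟨h1, h2, h3, h4⟩ := hm'
    have hil : i ≤ lam.len := lam.le_len (by omega)
    by_cases hiℓ : i = lam.len
    · subst hiℓ
      by_cases hj : j = 1
      · subst hj; exact Relation.ReflTransGen.refl
      · have hm2 : (lam.len, j - 1) ∈ cells lam (hookSub lam) := by
          rw [mem_cells_hookSub]
          have h5 : lam.f (lam.len + 1) = 0 := lam.f_eq_zero_of_len_lt (by omega)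
          exact ⟨h1, by omega, by omega, by omega⟩
        refine Relation.ReflTransGen.head ⟨hm, hm2, ?_⟩ (ih _ _ hm2 (by omega))
        exact Or.inl ⟨rfl, Or.inr (by omega)⟩
    · have hlt : i < lam.len := by omega
      have hfi1 : 0 < lam.f (i + 1) := lam.f_pos (by omega) (by omega)
      by_cases hj : j = lam.f (i + 1)
      · have hm2 : (i + 1, j) ∈ cells lam (hookSub lam) := by
          rw [mem_cells_hookSub]
          have := lam.antitone (show 1 ≤ i + 1 by omega) (show i + 1 ≤ i + 1 + 1 by omega)
          exact ⟨by omega, h2, by omega, by omega⟩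
        refine Relation.ReflTransGen.head ⟨hm, hm2, ?_⟩ (ih _ _ hm2 (by omega))
        exact Or.inr ⟨rfl, Or.inl rfl⟩
      · have hm2 : (i, j - 1) ∈ cells lam (hookSub lam) := by
          rw [mem_cells_hookSub]
          exact ⟨h1, by omega, by omega, by omega⟩
        refine Relation.ReflTransGen.head ⟨hm, hm2, ?_⟩ (ih _ _ hm2 (by omega))
        exact Or.inl ⟨rfl, Or.inr (by omega)⟩

lemma hookSub_box (lam : YPartition) (hpos : 0 < lam.len) :
    (lam.len, 1) ∈ cells lam (hookSub lam) := by
  rw [mem_cells_hookSub]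
  have h5 : lam.f (lam.len + 1) = 0 := lam.f_eq_zero_of_len_lt (by omega)
  have h6 := lam.f_pos hpos le_rfl
  exact ⟨hpos, le_rfl, by omega, by omega⟩

lemma isBorderStrip_hookSub (lam : YPartition) (hpos : 0 < lam.len) :
    IsBorderStrip lam (hookSub lam) := by
  have hsymm : Symmetric (fun x y => x ∈ cells lam (hookSub lam) ∧
      y ∈ cells lam (hookSub lam) ∧ Adj x y) := by
    rintro x y ⟨hx, hy, h⟩
    exact ⟨hy, hx, adj_symm h⟩
  refine ⟨hookSub_sub lam, ⟨(lam.len, 1), hookSub_box lam hpos⟩, ?_, ?_⟩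
  · rintro ⟨i, j⟩ ha ⟨i', j'⟩ hb
    have r1 := reach lam hpos (2 * lam.len + j) i j ha (by omega)
    have r2 := reach lam hpos (2 * lam.len + j') i' j' hb (by omega)
    exact r1.trans (Std.Symm.symm (self := @Relation.ReflTransGen.stdSymm _ _ ⟨fun a b h => hsymm h⟩) _ _ r2)
  · rintro ⟨i, j, ha, hb, hc, hd⟩
    rw [mem_cells_hookSub] at ha hb hc hd
    omega

lemma hookSub_unique (lam : YPartition) (hpos : 0 < lam.len)
    (hself : ∀ j, lam.f j = conjFun lam.f j) (ν' : YPartition)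
    (hsub : Sub ν' lam)
    (hno : ¬∃ i j : ℕ, (i, j) ∈ cells lam ν' ∧ (i + 1, j) ∈ cells lam ν' ∧
      (i, j + 1) ∈ cells lam ν' ∧ (i + 1, j + 1) ∈ cells lam ν')
    (hsz : stripSize lam ν' = 2 * lam.len - 1) : ν' = hookSub lam := by
  have hge : ∀ i, 1 ≤ i → (hookSub lam).f i ≤ ν'.f i := by
    intro i hi
    rw [hookSub_f lam hi]
    by_contra hc
    push_neg at hc
    apply hno
    have hmono := lam.antitone hi (show i ≤ i + 1 by omega)
    have hν := ν'.antitone hi (show i ≤ i + 1 by omega)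
    refine ⟨i, ν'.f i + 1, ?_, ?_, ?_, ?_⟩ <;>
      · simp only [cells, Set.mem_setOf_eq]
        exact ⟨by omega, by omega, by omega⟩
  have hsz2 := stripSize_eq_sum lam ν' (le_refl lam.len)
  have hsz3 := stripSize_eq_sum lam (hookSub lam) (le_refl lam.len)
  have hstrip := stripSize_hookSub lam hpos hself
  have hsum : ∑ i ∈ Finset.Icc 1 lam.len, (lam.f i - ν'.f i)
      = ∑ i ∈ Finset.Icc 1 lam.len, (lam.f i - (hookSub lam).f i) := by omega
  have hterm := (Finset.sum_eq_sum_iff_of_le (fun i hi => by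
    have := hge i (Finset.mem_Icc.mp hi).1
    exact Nat.sub_le_sub_left this _)).mp hsum
  apply ext'
  funext i
  rcases Nat.eq_zero_or_pos i with rfl | hi
  · rw [ν'.f_zero, (hookSub lam).f_zero]
  by_cases hile : i ≤ lam.len
  · have h1 := hterm i (Finset.mem_Icc.mpr ⟨hi, hile⟩)
    have h2 := hge i hi
    have h3 := hsub i
    have h4 := hookSub_sub lam i
    omega
  · have h0 : lam.f i = 0 := lam.f_eq_zero_of_len_lt (by omega)
    have h3 := hsub i
    rw [hookSub_f lam hi]
    have h5 : lam.f (i + 1) = 0 := lam.f_eq_zero_of_len_lt (by omega)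
    omega

lemma main_lemma : ∀ n, ∀ p : YPartition, p.size ≤ n → (∀ j, p.f j = conjFun p.f j) →
    (∃ i, ModRuleO p i) ∧ (∀ i, ModRuleO p i → 2 * i + p.rank = p.size) := by
  intro n
  induction n using Nat.strong_induction_on with
  | _ n ih =>
    intro p hsz hself
    rcases Nat.eq_zero_or_pos p.len with h0 | hpos
    · refine ⟨⟨0, ModRuleO.base p h0⟩, ?_⟩
      intro i hi
      cases hi with
      | base _ h =>
        have := p.rank_eq_zero h0
        have := p.size_eq_zero' h0
        omega
      | step _ ν i hlen _ _ _ _ => omega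
    · have hself' := hookSub_self p hself
      have hsizerel := size_hookSub p hpos hself
      have hrankrel := rank_hookSub p hpos hself
      have hcols := cols_hookSub p hpos hself
      have hbs := isBorderStrip_hookSub p hpos
      have hstrip := stripSize_hookSub p hpos hself
      have hbox := hookSub_box p hpos
      have hνsize : (hookSub p).size < p.size := by omega
      obtain ⟨⟨i₀, hmod₀⟩, huniq⟩ := ih (hookSub p).size (by omega) (hookSub p) le_rfl hself'
      have hval₀ := huniq i₀ hmod₀
      constructor
      · exact ⟨cols p (hookSub p) - 1 + i₀,
          ModRuleO.step p (hookSub p) i₀ hpos hbs hstrip hbox hmod₀⟩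
      · intro i hi
        cases hi with
        | base _ h => omega
        | step _ ν' i' hlen hbs' hsize' hbox' hrec =>
          have heq : ν' = hookSub p :=
            hookSub_unique p hpos hself ν' hbs'.1 hbs'.2.2.2 hsize'
          rw [heq] at hrec ⊢
          have := huniq i' hrec
          omega

end YPartition

open YPartition in
/-- For a self-conjugate partition `λ`, `i₁(λ) = (|λ| - rank(λ))/2`. -/
theorem statement11 (lam : YPartition) (hself : ∀ j : ℕ, lam.f j = conjFun lam.f j) :
    2 * i1 lam = ((lam.size - lam.rank : ℕ) : ℕ∞) := by
  obtain ⟨⟨i₀, hmod₀⟩, huniq⟩ := main_lemma lam.size lam le_rfl hself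
  have hval₀ := huniq i₀ hmod₀
  have hset : {c | ∃ i, ModRuleO lam i ∧ c = (i : ℕ∞)} = {((i₀ : ℕ) : ℕ∞)} := by
    ext c
    simp only [Set.mem_setOf_eq, Set.mem_singleton_iff]
    constructor
    · rintro ⟨i, hi, rfl⟩
      have h1 := huniq i hi
      have h2 : i = i₀ := by omega
      rw [h2]
    · rintro rfl
      exact ⟨i₀, hmod₀, rfl⟩
  rw [i1, hset, sInf_singleton]
  have h3 : lam.size - lam.rank = 2 * i₀ := by omega
  rw [h3]
  push_cast
  ring
end
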